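/- Let n ≥ 1, let ω = exp(2πi/n), let T ∈ M₃(ℂ) be the cyclic permutation matrix with T₁₂ = T₂₃ = T₃₁ = 1 and all other entries 0, and for 0 ≤ i, j ≤ n−1 let D_{ij} = diag(ω^i, ω^j, ω^{−i−j}). Then for every t ∈ ℂ with |t| < 1, (1/(3n²))·∑_{i=0}^{n−1}∑_{j=0}^{n−1}∑_{s=0}^{2} det(I − t·T^s·D_{ij})^{−1} = (1 − t^n + t^{2n}) / [(1 − t³)(1 − t^n)²]. That is, the Molien (Hilbert) series of the orbifold ℂ³/Δ(3n²) equals (1 − t^n + t^{2n})/((1 − t³)(1 − t^n)²), where Δ(3n²) ⊂ SU(3) consists of the 3n² matrices T^s·D_{ij}. -/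

import Mathlib

open scoped BigOperators
open Finset

private lemma detP0' (t a b c : ℂ) :
    ((1 : Matrix (Fin 3) (Fin 3) ℂ) -
      t • ((!![0, 1, 0; 0, 0, 1; 1, 0, 0] : Matrix (Fin 3) (Fin 3) ℂ) ^ 0 *
        Matrix.diagonal ![a, b, c])).det = (1 - t*a) * (1 - t*b) * (1 - t*c) := by
  rw [pow_zero, Matrix.one_mul, Matrix.det_fin_three]
  simp [Matrix.diagonal_apply, Matrix.one_apply, Matrix.vecHead, Matrix.vecTail]

private lemma detP1' (t a b c : ℂ) :
    ((1 : Matrix (Fin 3) (Fin 3) ℂ) -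
      t • ((!![0, 1, 0; 0, 0, 1; 1, 0, 0] : Matrix (Fin 3) (Fin 3) ℂ) ^ 1 *
        Matrix.diagonal ![a, b, c])).det = 1 - t^3 * (a * b * c) := by
  rw [pow_one, Matrix.det_fin_three]
  simp [Matrix.mul_apply, Matrix.vecMul, dotProduct, Fin.sum_univ_three,
    Matrix.diagonal_apply, Matrix.one_apply, Matrix.vecHead, Matrix.vecTail]
  ring

private lemma detP2' (t a b c : ℂ) :
    ((1 : Matrix (Fin 3) (Fin 3) ℂ) -
      t • ((!![0, 1, 0; 0, 0, 1; 1, 0, 0] : Matrix (Fin 3) (Fin 3) ℂ) ^ 2 *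
        Matrix.diagonal ![a, b, c])).det = 1 - t^3 * (a * b * c) := by
  rw [pow_two, Matrix.mul_assoc, Matrix.det_fin_three]
  simp [Matrix.mul_apply, Matrix.vecMul, dotProduct, Fin.sum_univ_three,
    Matrix.diagonal_apply, Matrix.one_apply, Matrix.vecHead, Matrix.vecTail]
  ring

private lemma inv_one_sub_mul' (n : ℕ) (t a : ℂ) (ha : a ^ n = 1)
    (h1 : (1 : ℂ) - t * a ≠ 0) (h2 : (1 : ℂ) - t ^ n ≠ 0) :
    (1 - t * a)⁻¹ = (∑ k ∈ range n, (t * a) ^ k) * (1 - t ^ n)⁻¹ := by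
  have key : (1 - t * a) * ∑ k ∈ range n, (t * a) ^ k = 1 - t ^ n := by
    have h := geom_sum_mul (t * a) n
    have h2' : (t * a) ^ n = t ^ n := by rw [mul_pow, ha, mul_one]
    linear_combination -h - h2'
  field_simp
  linear_combination -key

private lemma sum_zpow_orth' (n : ℕ) (ζ : ℂ) (hζ : IsPrimitiveRoot ζ n) (d : ℤ) :
    ∑ i ∈ range n, (ζ ^ d) ^ i = if (n : ℤ) ∣ d then (n : ℂ) else 0 := by
  by_cases h : (n : ℤ) ∣ d
  · rw [if_pos h]
    have h1 : ζ ^ d = 1 := (hζ.zpow_eq_one_iff_dvd d).mpr h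
    simp [h1]
  · rw [if_neg h]
    have hne : ζ ^ d ≠ 1 := fun hh => h ((hζ.zpow_eq_one_iff_dvd d).mp hh)
    have hpow : (ζ ^ d) ^ n = 1 := by
      rw [← zpow_natCast (ζ ^ d), ← zpow_mul, mul_comm, zpow_mul, zpow_natCast,
        hζ.pow_eq_one, one_zpow]
    have hg := geom_sum_mul (ζ ^ d) n
    rw [hpow, sub_self] at hg
    rcases mul_eq_zero.mp hg with h' | h'
    · exact h'
    · exact absurd (sub_eq_zero.mp h') hne

private lemma zpow_pow_eq (ω : ℂ) (a : ℤ) (b : ℕ) : (ω ^ a) ^ b = ω ^ (a * b) := by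
  rw [← zpow_natCast (ω ^ a), ← zpow_mul]

/-- key inner orthogonality sum -/
private lemma inner_orth (n : ℕ) (ω t : ℂ) (hω0 : ω ≠ 0)
    (hprim : IsPrimitiveRoot ω n) (m : ℕ) (hm : m ∈ range n) :
    ∑ i ∈ range n, (∑ k ∈ range n, (t * ω ^ i) ^ k) * (ω ^ (-(m:ℤ))) ^ i
      = (n : ℂ) * t ^ m := by
  have e2 : ∀ i k : ℕ, (t * ω ^ i) ^ k * (ω ^ (-(m:ℤ))) ^ i
      = t ^ k * (ω ^ ((k:ℤ) - m)) ^ i := by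
    intro i k
    rw [mul_pow, ← zpow_natCast ω i, zpow_pow_eq, zpow_pow_eq, zpow_pow_eq, mul_assoc,
      ← zpow_add₀ hω0]
    congr 2
    ring
  calc ∑ i ∈ range n, (∑ k ∈ range n, (t * ω ^ i) ^ k) * (ω ^ (-(m:ℤ))) ^ i
      = ∑ i ∈ range n, ∑ k ∈ range n, t ^ k * (ω ^ ((k:ℤ) - m)) ^ i := by
        refine Finset.sum_congr rfl fun i _ => ?_
        rw [Finset.sum_mul]
        exact Finset.sum_congr rfl fun k _ => e2 i k
    _ = ∑ k ∈ range n, ∑ i ∈ range n, t ^ k * (ω ^ ((k:ℤ) - m)) ^ i := Finset.sum_comm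
    _ = ∑ k ∈ range n, t ^ k * (if (n:ℤ) ∣ ((k:ℤ) - m) then (n : ℂ) else 0) := by
        refine Finset.sum_congr rfl fun k _ => ?_
        rw [← Finset.mul_sum, sum_zpow_orth' n ω hprim]
    _ = ∑ k ∈ range n, (if k = m then t ^ k * n else 0) := by
        refine Finset.sum_congr rfl fun k hk => ?_
        have hk' : k < n := Finset.mem_range.mp hk
        have hm' : m < n := Finset.mem_range.mp hm
        by_cases hkm : k = m
        · subst hkm; simp
        · have hnd : ¬ (n:ℤ) ∣ ((k:ℤ) - m) := by
            intro hd
            have habs : |(k:ℤ) - m| < n := by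
              rw [abs_lt]; constructor <;> [push_cast; push_cast] <;> omega
            have := Int.eq_zero_of_dvd_of_natAbs_lt_natAbs hd (by omega)
            exact hkm (by omega)
          rw [if_neg hnd, if_neg hkm, mul_zero]
    _ = (n : ℂ) * t ^ m := by
        rw [Finset.sum_ite_eq' (range n) m (fun k => t ^ k * n), if_pos hm, mul_comm]


private lemma final_alg (N u v : ℂ) (hN : N ≠ 0) (hu : (1:ℂ) - u ≠ 0) (hv : (1:ℂ) - v ≠ 0) :
    (1 / (3 * N ^ 2)) *
      (N ^ 2 * ((1 - u ^ 3) / (1 - v)) * ((1 - u)⁻¹) ^ 3 + N ^ 2 * (2 * (1 - v)⁻¹))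
    = (1 - u + u ^ 2) / ((1 - v) * (1 - u) ^ 2) := by
  field_simp [hu, hv, hN]
  ring

theorem molien_Delta_3n2 (n : ℕ) (hn : 1 ≤ n) (t : ℂ) (ht : ‖t‖ < 1) :
    (1 / (3 * (n : ℂ) ^ 2)) *
      ∑ i ∈ Finset.range n, ∑ j ∈ Finset.range n, ∑ s ∈ Finset.range 3,
        (Matrix.det
          ((1 : Matrix (Fin 3) (Fin 3) ℂ) -
            t • ((!![0, 1, 0; 0, 0, 1; 1, 0, 0] : Matrix (Fin 3) (Fin 3) ℂ) ^ s *
              Matrix.diagonal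
                ![Complex.exp (2 * Real.pi * Complex.I / n) ^ i,
                  Complex.exp (2 * Real.pi * Complex.I / n) ^ j,
                  Complex.exp (2 * Real.pi * Complex.I / n) ^ (-(i : ℤ) - (j : ℤ))])))⁻¹
    = (1 - t ^ n + t ^ (2 * n)) / ((1 - t ^ 3) * (1 - t ^ n) ^ 2) := by
  have hn0 : n ≠ 0 := by omega
  set ω : ℂ := Complex.exp (2 * Real.pi * Complex.I / n) with hω_def
  have hnC : (n : ℂ) ≠ 0 := Nat.cast_ne_zero.mpr hn0
  have hprim : IsPrimitiveRoot ω n := Complex.isPrimitiveRoot_exp n hn0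
  have hωn : ω ^ n = 1 := hprim.pow_eq_one
  have hω0 : ω ≠ 0 := Complex.exp_ne_zero _
  have habs : ‖ω‖ = 1 := by
    have h : ‖ω‖ ^ n = 1 := by rw [← norm_pow, hωn, norm_one]
    rcases lt_trichotomy (‖ω‖) 1 with hlt | heq | hgt
    · have := pow_lt_one₀ (norm_nonneg ω) hlt hn0
      rw [h] at this; linarith
    · exact heq
    · have := one_lt_pow₀ hgt hn0
      rw [h] at this; linarith
  have habs_zpow : ∀ d : ℤ, ‖(ω ^ d)‖ = 1 := fun d => by
    rw [norm_zpow, habs, one_zpow]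
  have habs_pow : ∀ d : ℕ, ‖(ω ^ d)‖ = 1 := fun d => by
    rw [norm_pow, habs, one_pow]
  have hfac : ∀ z : ℂ, ‖z‖ = 1 → (1 : ℂ) - t * z ≠ 0 := by
    intro z hz h
    have h1 : (1:ℂ) = t * z := by linear_combination h
    have h2 : (1:ℝ) = ‖t‖ := by
      calc (1:ℝ) = ‖(t*z)‖ := by rw [← h1]; simp
      _ = ‖t‖ := by rw [norm_mul, hz, mul_one]
    linarith
  have htabs : ∀ m : ℕ, m ≠ 0 → ‖t‖ ^ m < 1 := fun m hm =>
    pow_lt_one₀ (norm_nonneg t) ht hm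
  have htn : (1 : ℂ) - t ^ n ≠ 0 := by
    intro h
    have h1 : (1:ℂ) = t ^ n := by linear_combination h
    have h2 : (1:ℝ) = ‖t‖ ^ n := by
      calc (1:ℝ) = ‖(t ^ n)‖ := by rw [← h1]; simp
      _ = ‖t‖ ^ n := by rw [norm_pow]
    have := htabs n hn0; linarith
  have ht3 : (1 : ℂ) - t ^ 3 ≠ 0 := by
    intro h
    have h1 : (1:ℂ) = t ^ 3 := by linear_combination h
    have h2 : (1:ℝ) = ‖t‖ ^ 3 := by
      calc (1:ℝ) = ‖(t ^ 3)‖ := by rw [← h1]; simp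
      _ = ‖t‖ ^ 3 := by rw [norm_pow]
    have := htabs 3 (by norm_num); linarith
  have hxi : ∀ i : ℕ, (ω ^ i) ^ n = 1 := fun i => by
    rw [← pow_mul, mul_comm, pow_mul, hωn, one_pow]
  have hzi : ∀ z : ℤ, (ω ^ z) ^ n = 1 := fun z => by
    rw [← zpow_natCast (ω ^ z), ← zpow_mul, mul_comm, zpow_mul, zpow_natCast, hωn, one_zpow]
  -- step 1: the s-sum
  have hsum_s : ∀ i j : ℕ,
      (∑ s ∈ Finset.range 3,
        (Matrix.det
          ((1 : Matrix (Fin 3) (Fin 3) ℂ) -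
            t • ((!![0, 1, 0; 0, 0, 1; 1, 0, 0] : Matrix (Fin 3) (Fin 3) ℂ) ^ s *
              Matrix.diagonal ![ω ^ i, ω ^ j, ω ^ (-(i : ℤ) - (j : ℤ))])))⁻¹)
      = ((1 - t * ω ^ i) * (1 - t * ω ^ j) * (1 - t * ω ^ (-(i:ℤ) - (j:ℤ))))⁻¹
        + 2 * (1 - t ^ 3)⁻¹ := by
    intro i j
    have habc : ω ^ i * ω ^ j * ω ^ (-(i:ℤ) - (j:ℤ)) = 1 := by
      rw [← zpow_natCast ω i, ← zpow_natCast ω j, ← zpow_add₀ hω0, ← zpow_add₀ hω0]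
      rw [show (i:ℤ) + (j:ℤ) + (-(i:ℤ) - (j:ℤ)) = 0 by ring, zpow_zero]
    rw [Finset.sum_range_succ, Finset.sum_range_succ, Finset.sum_range_one,
      detP0' t _ _ _, detP1' t _ _ _, detP2' t _ _ _, habc, mul_one]
    ring
  -- step 2: the double-sum core
  have hS : ∑ i ∈ range n, ∑ j ∈ range n,
        ((1 - t * ω ^ i) * (1 - t * ω ^ j) * (1 - t * ω ^ (-(i:ℤ) - (j:ℤ))))⁻¹
      = (n:ℂ)^2 * (∑ m ∈ range n, (t ^ 3) ^ m) * ((1 - t ^ n)⁻¹) ^ 3 := by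
    have e1 : ∀ i j m : ℕ, (t * ω ^ (-(i:ℤ) - (j:ℤ))) ^ m
        = t ^ m * ((ω ^ (-(m:ℤ))) ^ i * (ω ^ (-(m:ℤ))) ^ j) := by
      intro i j m
      rw [mul_pow, zpow_pow_eq, zpow_pow_eq, zpow_pow_eq, ← zpow_add₀ hω0]
      congr 2
      ring
    have step1 : ∀ i j : ℕ,
        ((1 - t * ω ^ i) * (1 - t * ω ^ j) * (1 - t * ω ^ (-(i:ℤ) - (j:ℤ))))⁻¹
        = ((∑ k ∈ range n, (t * ω ^ i) ^ k) * (∑ l ∈ range n, (t * ω ^ j) ^ l)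
            * (∑ m ∈ range n, (t * ω ^ (-(i:ℤ) - (j:ℤ))) ^ m)) * ((1 - t ^ n)⁻¹) ^ 3 := by
      intro i j
      rw [mul_inv, mul_inv,
        inv_one_sub_mul' n t (ω ^ i) (hxi i) (hfac _ (habs_pow i)) htn,
        inv_one_sub_mul' n t (ω ^ j) (hxi j) (hfac _ (habs_pow j)) htn,
        inv_one_sub_mul' n t (ω ^ (-(i:ℤ) - (j:ℤ))) (hzi _) (hfac _ (habs_zpow _)) htn]
      ring
    calc ∑ i ∈ range n, ∑ j ∈ range n,
          ((1 - t * ω ^ i) * (1 - t * ω ^ j) * (1 - t * ω ^ (-(i:ℤ) - (j:ℤ))))⁻¹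
        = (∑ i ∈ range n, ∑ j ∈ range n,
            (∑ k ∈ range n, (t * ω ^ i) ^ k) * (∑ l ∈ range n, (t * ω ^ j) ^ l)
              * (∑ m ∈ range n, (t * ω ^ (-(i:ℤ) - (j:ℤ))) ^ m)) * ((1 - t ^ n)⁻¹) ^ 3 := by
          rw [Finset.sum_mul]
          refine Finset.sum_congr rfl fun i _ => ?_
          rw [Finset.sum_mul]
          exact Finset.sum_congr rfl fun j _ => step1 i j
      _ = ((n:ℂ)^2 * ∑ m ∈ range n, (t ^ 3) ^ m) * ((1 - t ^ n)⁻¹) ^ 3 := by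
          congr 1
          calc ∑ i ∈ range n, ∑ j ∈ range n,
                (∑ k ∈ range n, (t * ω ^ i) ^ k) * (∑ l ∈ range n, (t * ω ^ j) ^ l)
                  * (∑ m ∈ range n, (t * ω ^ (-(i:ℤ) - (j:ℤ))) ^ m)
              = ∑ i ∈ range n, ∑ j ∈ range n, ∑ m ∈ range n,
                  ((∑ k ∈ range n, (t * ω ^ i) ^ k) * (ω ^ (-(m:ℤ))) ^ i * t ^ m)
                    * ((∑ l ∈ range n, (t * ω ^ j) ^ l) * (ω ^ (-(m:ℤ))) ^ j) := by
                refine Finset.sum_congr rfl fun i _ => Finset.sum_congr rfl fun j _ => ?_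
                rw [Finset.mul_sum]
                refine Finset.sum_congr rfl fun m _ => ?_
                rw [e1 i j m]
                ring
            _ = ∑ i ∈ range n, ∑ m ∈ range n,
                  ((∑ k ∈ range n, (t * ω ^ i) ^ k) * (ω ^ (-(m:ℤ))) ^ i)
                    * (t ^ m * ((n:ℂ) * t ^ m)) := by
                refine Finset.sum_congr rfl fun i _ => ?_
                rw [Finset.sum_comm]
                refine Finset.sum_congr rfl fun m hm => ?_
                rw [← Finset.mul_sum, inner_orth n ω t hω0 hprim m hm]
                ring
            _ = ∑ m ∈ range n, ((n:ℂ) * t ^ m) * (t ^ m * ((n:ℂ) * t ^ m)) := by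
                rw [Finset.sum_comm]
                refine Finset.sum_congr rfl fun m hm => ?_
                rw [← Finset.sum_mul, inner_orth n ω t hω0 hprim m hm]
            _ = (n:ℂ)^2 * ∑ m ∈ range n, (t ^ 3) ^ m := by
                rw [Finset.mul_sum]
                refine Finset.sum_congr rfl fun m _ => ?_
                rw [pow_right_comm t 3 m]
                ring
      _ = (n:ℂ)^2 * (∑ m ∈ range n, (t ^ 3) ^ m) * ((1 - t ^ n)⁻¹) ^ 3 := by ring
  -- assemble
  calc (1 / (3 * (n : ℂ) ^ 2)) *
      ∑ i ∈ Finset.range n, ∑ j ∈ Finset.range n, ∑ s ∈ Finset.range 3,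
        (Matrix.det
          ((1 : Matrix (Fin 3) (Fin 3) ℂ) -
            t • ((!![0, 1, 0; 0, 0, 1; 1, 0, 0] : Matrix (Fin 3) (Fin 3) ℂ) ^ s *
              Matrix.diagonal ![ω ^ i, ω ^ j, ω ^ (-(i : ℤ) - (j : ℤ))])))⁻¹
      = (1 / (3 * (n : ℂ) ^ 2)) *
        ∑ i ∈ range n, ∑ j ∈ range n,
          (((1 - t * ω ^ i) * (1 - t * ω ^ j) * (1 - t * ω ^ (-(i:ℤ) - (j:ℤ))))⁻¹
            + 2 * (1 - t ^ 3)⁻¹) := by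
        congr 1
        exact Finset.sum_congr rfl fun i _ => Finset.sum_congr rfl fun j _ => hsum_s i j
    _ = (1 / (3 * (n : ℂ) ^ 2)) *
        ((∑ i ∈ range n, ∑ j ∈ range n,
          ((1 - t * ω ^ i) * (1 - t * ω ^ j) * (1 - t * ω ^ (-(i:ℤ) - (j:ℤ))))⁻¹)
          + (n:ℂ)^2 * (2 * (1 - t ^ 3)⁻¹)) := by
        congr 1
        simp only [Finset.sum_add_distrib, Finset.sum_const, Finset.card_range,
          nsmul_eq_mul]
        push_cast
        ring
    _ = (1 - t ^ n + t ^ (2 * n)) / ((1 - t ^ 3) * (1 - t ^ n) ^ 2) := by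
        rw [hS]
        have hGval : (∑ m ∈ range n, (t ^ 3) ^ m) = (1 - (t ^ n) ^ 3) / (1 - t ^ 3) := by
          have h := geom_sum_mul (t ^ 3) n
          rw [pow_right_comm] at h
          rw [eq_div_iff ht3]
          linear_combination -h
        have h2n : t ^ (2 * n) = (t ^ n) ^ 2 := by rw [mul_comm, pow_mul]
        rw [h2n, hGval]
        exact final_alg (n:ℂ) (t ^ n) (t ^ 3) hnC htn ht3
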